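/- Let C be a linear [n,k] code over F_q with generator matrix G, let t ≥ 1 be an integer, and let C_t = {xG : x ∈ F_{q^t}^k} be the linear [n,k] code over F_{q^t} generated by the same matrix G. Then the t-th generalized covering radius of C equals the (ordinary) covering radius of C_t: R_t(C) = R_1(C_t). -/

import Mathlib

/-- The `t`-th generalized covering radius of a linear code `C ⊆ F^n`. -/
noncomputable def genCovRad {F : Type*} [Field F] {n : ℕ} (C : Submodule F (Fin n → F))
    (t : ℕ) : ℕ :=
  sInf { r | ∀ v : Fin t → (Fin n → F), ∃ c : Fin t → (Fin n → F),
    (∀ i, c i ∈ C) ∧ ∃ I : Finset (Fin n), I.card = r ∧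
      ∀ i j, (v i - c i) j ≠ 0 → j ∈ I }

/-- The covering radius of a linear code `C ⊆ F^ι`. -/
noncomputable def covRad (F : Type*) [Field F] [DecidableEq F] {ι : Type*} [Fintype ι]
    (C : Submodule F (ι → F)) : ℕ :=
  sInf { r | ∀ v : ι → F, ∃ c ∈ C, hammingDist v c ≤ r }

/-- If `C` is an `[n,k]` code over `F_q` with generator matrix `G`, and `C_t` is the
`[n,k]` code over `F_{q^t}` generated by the same matrix `G` (i.e. `{xG : x ∈ F_{q^t}^k}`),
then `R_t(C) = R_1(C_t)`. -/
theorem stmt7 {F E : Type*} [Field F] [Fintype F] [Field E] [Fintype E] [DecidableEq E]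
    [Algebra F E] {q t n k : ℕ}
    (hq : Fintype.card F = q) (hE : Fintype.card E = q ^ t) (ht : 1 ≤ t)
    (G : Matrix (Fin k) (Fin n) F)
    (C : Submodule F (Fin n → F)) (hC : C = Submodule.span F (Set.range G))
    (hdim : Module.finrank F C = k)
    (Ct : Submodule E (Fin n → E))
    (hCt : Ct = LinearMap.range (Matrix.vecMulLinear (G.map (algebraMap F E)))) :
    genCovRad C t = covRad E Ct := by
  classical
  -- the degree of the extension is `t`
  have h2 : 2 ≤ q := by
    have := Fintype.one_lt_card (α := F)
    omega
  have hfr : Module.finrank F E = t := by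
    have hcard := Module.card_eq_pow_finrank (K := F) (V := E)
    rw [hq, hE] at hcard
    exact Nat.pow_right_injective h2 hcard.symm
  have hMF : FiniteDimensional F E := Module.finite_of_finrank_pos (by omega)
  let b : Module.Basis (Fin t) F E := (Module.finBasis F E).reindex (finCongr hfr)
  set G' := G.map (algebraMap F E) with hG'
  -- membership characterizations
  have hmemC : ∀ w : Fin n → F, w ∈ C ↔ ∃ x : Fin k → F, Matrix.vecMul x G = w := by
    intro w
    rw [hC, show Set.range G = Set.range G.row from rfl, ← range_vecMulLinear]
    constructor
    · rintro ⟨x, hx⟩; exact ⟨x, hx⟩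
    · rintro ⟨x, hx⟩; exact ⟨x, hx⟩
  have hmemCt : ∀ w : Fin n → E, w ∈ Ct ↔ ∃ x : Fin k → E, Matrix.vecMul x G' = w := by
    intro w
    rw [hCt]
    constructor
    · rintro ⟨x, hx⟩; exact ⟨x, hx⟩
    · rintro ⟨x, hx⟩; exact ⟨x, hx⟩
  -- every element of `E` is the sum of its coordinates in the basis `b`
  have hsum_repr : ∀ e : E, (∑ l, algebraMap F E (b.repr e l) * b l) = e := by
    intro e
    conv_rhs => rw [← b.sum_repr e]
    refine Finset.sum_congr rfl fun l _ => ?_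
    rw [Algebra.smul_def]
  -- coordinates w.r.t. `b` are unique
  have hrep : ∀ (w w' : Fin t → F),
      (∑ l, algebraMap F E (w l) * b l) = (∑ l, algebraMap F E (w' l) * b l) → w = w' := by
    intro w w' h
    apply b.equivFun.symm.injective
    rw [Module.Basis.equivFun_symm_apply, Module.Basis.equivFun_symm_apply]
    simpa [Algebra.smul_def] using h
  -- key expansion of `x ᵥ* G'` in coordinates
  have key : ∀ (x : Fin k → E) (j : Fin n),
      Matrix.vecMul x G' j
        = ∑ l, algebraMap F E (Matrix.vecMul (fun i => b.repr (x i) l) G j) * b l := by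
    intro x j
    simp only [Matrix.vecMul, dotProduct, hG', Matrix.map_apply, map_sum,
      Finset.sum_mul]
    rw [Finset.sum_comm]
    refine Finset.sum_congr rfl fun i _ => ?_
    conv_lhs => rw [← hsum_repr (x i), Finset.sum_mul]
    refine Finset.sum_congr rfl fun l _ => ?_
    rw [map_mul]
    ring
  -- the two defining sets
  set A := { r | ∀ v : Fin t → (Fin n → F), ∃ c : Fin t → (Fin n → F),
    (∀ i, c i ∈ C) ∧ ∃ I : Finset (Fin n), I.card = r ∧
      ∀ i j, (v i - c i) j ≠ 0 → j ∈ I } with hA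
  set B := { r | ∀ v : Fin n → E, ∃ c ∈ Ct, hammingDist v c ≤ r } with hB
  -- A ⊆ B
  have h1 : ∀ r ∈ A, r ∈ B := by
    intro r hr v
    obtain ⟨c, hc, I, hIcard, hcov⟩ := hr (fun l j => b.repr (v j) l)
    choose x hx using fun l => (hmemC (c l)).1 (hc l)
    refine ⟨Matrix.vecMul (fun i => ∑ l, algebraMap F E (x l i) * b l) G', (hmemCt _).2 ⟨_, rfl⟩, ?_⟩
    set xE : Fin k → E := fun i => ∑ l, algebraMap F E (x l i) * b l with hxE
    have hxrep : ∀ i, (fun l => b.repr (xE i) l) = fun l => x l i := by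
      intro i
      apply hrep
      rw [hsum_repr]
    have hsub : Finset.univ.filter (fun j => v j ≠ Matrix.vecMul xE G' j) ⊆ I := by
      intro j hj
      simp only [Finset.mem_filter, Finset.mem_univ, true_and] at hj
      by_contra hjI
      apply hj
      rw [key xE j, ← hsum_repr (v j)]
      refine Finset.sum_congr rfl fun l _ => ?_
      have hv : Matrix.vecMul (fun i => b.repr (xE i) l) G = c l := by
        have hfl : (fun i => b.repr (xE i) l) = x l := funext fun i => congrFun (hxrep i) l
        rw [hfl, hx l]
      rw [hv]
      have heql : b.repr (v j) l = c l j := by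
        by_contra hne
        exact hjI (hcov l j (by simpa [sub_eq_zero] using hne))
      rw [heql]
    calc hammingDist v (Matrix.vecMul xE G')
        = (Finset.univ.filter (fun j => v j ≠ Matrix.vecMul xE G' j)).card := rfl
      _ ≤ I.card := Finset.card_le_card hsub
      _ = r := hIcard
  -- B ∩ [0, n] ⊆ A
  have h2' : ∀ r, r ≤ n → r ∈ B → r ∈ A := by
    intro r hrn hr v
    set vE : Fin n → E := fun j => ∑ l, algebraMap F E (v l j) * b l with hvE
    obtain ⟨c, hcmem, hdist⟩ := hr vE
    obtain ⟨x, hx⟩ := (hmemCt c).1 hcmem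
    set cl : Fin t → Fin n → F := fun l => Matrix.vecMul (fun i => b.repr (x i) l) G with hcl
    have hsle : (Finset.univ.filter (fun j => vE j ≠ c j)).card ≤ r := hdist
    obtain ⟨I, hsI, hIcard⟩ := Finset.exists_superset_card_eq hsle (by simpa using hrn)
    refine ⟨cl, fun l => (hmemC _).2 ⟨_, rfl⟩, I, hIcard, ?_⟩
    intro l j hne
    apply hsI
    simp only [Finset.mem_filter, Finset.mem_univ, true_and]
    intro heq
    apply hne
    have : vE j = ∑ l, algebraMap F E (cl l j) * b l := by
      rw [heq, ← hx, key]
    have h3 := hrep (fun l => v l j) (fun l => cl l j) this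
    have : v l j = cl l j := congrFun h3 l
    simp [Pi.sub_apply, this]
  -- n belongs to B
  have hnB : n ∈ B := by
    intro v
    exact ⟨0, Ct.zero_mem, le_trans hammingDist_le_card_fintype (by simp)⟩
  have hnA : n ∈ A := h2' n le_rfl hnB
  have hBne : B.Nonempty := ⟨n, hnB⟩
  have hAne : A.Nonempty := ⟨n, hnA⟩
  show sInf A = sInf B
  apply le_antisymm
  · exact Nat.sInf_le (h2' _ (le_trans (Nat.sInf_le hnB) le_rfl) (Nat.sInf_mem hBne))
  · exact Nat.sInf_le (h1 _ (Nat.sInf_mem hAne))
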